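/- Let f be a face with 2ℓ vertices. The 4ℓ-2 operators consisting of: Z_{2i-1}Z_{2i} and X_{2i-1}X_{2i} for i=1..ℓ, Z_{2i}Z_{2i+1} for i=1..ℓ-1, and X_{2i}X_{2i+1} for i≠m (for any fixed m in 1..ℓ, indices mod 2ℓ), together with the two single-qubit operators X_1 and Z_{2m}, generate the full Pauli group (mod phases) on the 2ℓ qubits of f; equivalently, their symplectic vectors span F_2^{4ℓ}. -/

import Mathlib

/-- The standard basis vector `e_k ∈ F₂^N`, index taken modulo `N`. -/
def basisVec (N k : ℕ) : Fin N → ZMod 2 := fun j => if (j : ℕ) = k % N then 1 else 0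

/-- The edge-indicator vector `e_k + e_{k+1} ∈ F₂^N` (indices mod `N`). -/
def edgeVec (N k : ℕ) : Fin N → ZMod 2 := basisVec N k + basisVec N (k + 1)

lemma vec_add_self {N : ℕ} (v : Fin N → ZMod 2) : v + v = 0 := by
  funext j; have : ∀ x : ZMod 2, x + x = 0 := by decide
  exact this (v j)

lemma tele {N : ℕ} (W : Submodule (ZMod 2) (Fin N → ZMod 2)) (a b : ℕ)
    (hab : a ≤ b) (h : ∀ k, a ≤ k → k < b → edgeVec N k ∈ W) :
    basisVec N a + basisVec N b ∈ W := by
  induction b, hab using Nat.le_induction with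
  | base => rw [vec_add_self]; exact zero_mem W
  | succ b hb ih =>
    have h1 := ih (fun k hk hk' => h k hk (by omega))
    have h2 := h b hb (by omega)
    have key : basisVec N a + basisVec N (b+1)
        = (basisVec N a + basisVec N b) + edgeVec N b := by
      unfold edgeVec
      linear_combination -vec_add_self (basisVec N b)
    rw [key]; exact add_mem h1 h2

lemma all_mem {N : ℕ} (W : Submodule (ZMod 2) (Fin N → ZMod 2))
    (h : ∀ k, k < N → basisVec N k ∈ W) (x : Fin N → ZMod 2) : x ∈ W := by
  rw [pi_eq_sum_univ x]
  refine Submodule.sum_mem _ fun i _ => Submodule.smul_mem _ _ ?_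
  have := h i.val i.isLt
  have e : basisVec N i.val = fun j => if i = j then 1 else 0 := by
    funext j
    simp [basisVec, Nat.mod_eq_of_lt i.isLt, Fin.ext_iff, eq_comm]
  rwa [e] at this

lemma aux_span (ℓ m : ℕ) (hℓ : 0 < ℓ) (hm1 : 1 ≤ m) (hmℓ : m ≤ ℓ)
    (V : Submodule (ZMod 2) ((Fin (2 * ℓ) → ZMod 2) × (Fin (2 * ℓ) → ZMod 2)))
    (hZe : ∀ i, 1 ≤ i → i ≤ ℓ → ((0, edgeVec (2 * ℓ) (2 * i - 2)) : _ × _) ∈ V)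
    (hXe : ∀ i, 1 ≤ i → i ≤ ℓ → ((edgeVec (2 * ℓ) (2 * i - 2), 0) : _ × _) ∈ V)
    (hZo : ∀ i, 1 ≤ i → i ≤ ℓ - 1 → ((0, edgeVec (2 * ℓ) (2 * i - 1)) : _ × _) ∈ V)
    (hXo : ∀ i, 1 ≤ i → i ≤ ℓ → i ≠ m → ((edgeVec (2 * ℓ) (2 * i - 1), 0) : _ × _) ∈ V)
    (hX1 : ((basisVec (2 * ℓ) 0, 0) : _ × _) ∈ V)
    (hZm : ((0, basisVec (2 * ℓ) (2 * m - 1)) : _ × _) ∈ V) :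
    V = ⊤ := by
  set WX : Submodule (ZMod 2) (Fin (2 * ℓ) → ZMod 2) :=
    V.comap (LinearMap.inl (ZMod 2) _ _) with hWX
  set WZ : Submodule (ZMod 2) (Fin (2 * ℓ) → ZMod 2) :=
    V.comap (LinearMap.inr (ZMod 2) _ _) with hWZ
  have memX : ∀ v : Fin (2 * ℓ) → ZMod 2, v ∈ WX ↔ ((v, 0) : _ × _) ∈ V := by
    intro v; simp [hWX, Submodule.mem_comap]
  have memZ : ∀ v : Fin (2 * ℓ) → ZMod 2, v ∈ WZ ↔ ((0, v) : _ × _) ∈ V := by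
    intro v; simp [hWZ, Submodule.mem_comap]
  -- edge memberships in terms of raw index k
  have hZedge : ∀ k, k < 2 * ℓ - 1 → edgeVec (2 * ℓ) k ∈ WZ := by
    intro k hk
    rcases Nat.even_or_odd k with ⟨i, hi⟩ | ⟨i, hi⟩
    · have := hZe (i + 1) (by omega) (by omega)
      rw [memZ]; rwa [show 2 * (i + 1) - 2 = k by omega] at this
    · have := hZo (i + 1) (by omega) (by omega)
      rw [memZ]; rwa [show 2 * (i + 1) - 1 = k by omega] at this
  have hXedge : ∀ k, k < 2 * ℓ → k ≠ 2 * m - 1 → edgeVec (2 * ℓ) k ∈ WX := by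
    intro k hk hk2
    rcases Nat.even_or_odd k with ⟨i, hi⟩ | ⟨i, hi⟩
    · have := hXe (i + 1) (by omega) (by omega)
      rw [memX]; rwa [show 2 * (i + 1) - 2 = k by omega] at this
    · have := hXo (i + 1) (by omega) (by omega) (by omega)
      rw [memX]; rwa [show 2 * (i + 1) - 1 = k by omega] at this
  have hZmW : basisVec (2 * ℓ) (2 * m - 1) ∈ WZ := (memZ _).mpr hZm
  have hX0W : basisVec (2 * ℓ) 0 ∈ WX := (memX _).mpr hX1
  -- all Z basis vectors
  have hZb : ∀ t, t < 2 * ℓ → basisVec (2 * ℓ) t ∈ WZ := by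
    intro t ht
    rcases le_total t (2 * m - 1) with h | h
    · have hp := tele WZ t (2 * m - 1) h (fun k hk hk' => hZedge k (by omega))
      have key : basisVec (2 * ℓ) t
          = (basisVec (2 * ℓ) t + basisVec (2 * ℓ) (2 * m - 1)) + basisVec (2 * ℓ) (2 * m - 1) := by
        linear_combination -vec_add_self (basisVec (2 * ℓ) (2 * m - 1))
      rw [key]; exact add_mem hp hZmW
    · have hp := tele WZ (2 * m - 1) t h (fun k hk hk' => hZedge k (by omega))
      have key : basisVec (2 * ℓ) t
          = (basisVec (2 * ℓ) (2 * m - 1) + basisVec (2 * ℓ) t) + basisVec (2 * ℓ) (2 * m - 1) := by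
        linear_combination -vec_add_self (basisVec (2 * ℓ) (2 * m - 1))
      rw [key]; exact add_mem hp hZmW
  -- all X basis vectors
  have hwrap : basisVec (2 * ℓ) (2 * ℓ) = basisVec (2 * ℓ) 0 := by
    unfold basisVec; rw [Nat.mod_self, Nat.zero_mod]
  have hXb : ∀ t, t < 2 * ℓ → basisVec (2 * ℓ) t ∈ WX := by
    intro t ht
    rcases le_or_gt t (2 * m - 1) with h | h
    · have hp := tele WX 0 t (by omega) (fun k hk hk' => hXedge k (by omega) (by omega))
      have key : basisVec (2 * ℓ) t = (basisVec (2 * ℓ) 0 + basisVec (2 * ℓ) t) + basisVec (2 * ℓ) 0 := by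
        linear_combination -vec_add_self (basisVec (2 * ℓ) 0)
      rw [key]; exact add_mem hp hX0W
    · -- t ≥ 2m, hence m < ℓ
      have hml : m < ℓ := by omega
      have h1 : edgeVec (2 * ℓ) (2 * ℓ - 1) ∈ WX := hXedge (2 * ℓ - 1) (by omega) (by omega)
      have h2 := tele WX t (2 * ℓ - 1) (by omega)
        (fun k hk hk' => hXedge k (by omega) (by omega))
      have key : basisVec (2 * ℓ) t
          = ((basisVec (2 * ℓ) t + basisVec (2 * ℓ) (2 * ℓ - 1)) + edgeVec (2 * ℓ) (2 * ℓ - 1))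
            + basisVec (2 * ℓ) 0 := by
        unfold edgeVec
        rw [show 2 * ℓ - 1 + 1 = 2 * ℓ by omega, hwrap]
        linear_combination -vec_add_self (basisVec (2 * ℓ) (2 * ℓ - 1))
          - vec_add_self (basisVec (2 * ℓ) 0)
      rw [key]; exact add_mem (add_mem h2 h1) hX0W
  -- conclude
  rw [eq_top_iff]
  rintro ⟨x, z⟩ -
  have hx : ((x, 0) : _ × _) ∈ V := (memX x).mp (all_mem WX hXb x)
  have hz : ((0, z) : _ × _) ∈ V := (memZ z).mp (all_mem WZ hZb z)
  have : ((x, z) : _ × _) = (x, 0) + (0, z) := by simp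
  rw [this]; exact add_mem hx hz

/-- Let `f` be a face with `2ℓ` vertices labeled `1, …, 2ℓ` cyclically
(vertex `v` corresponds to coordinate `v - 1`).  Pauli operators on the `2ℓ` qubits of `f`
modulo phases are identified with `F₂^{4ℓ} = F₂^{2ℓ} × F₂^{2ℓ}` (X-part, Z-part).  The
`4ℓ - 2` operators consisting of `Z_{2i-1}Z_{2i}` and `X_{2i-1}X_{2i}` for `i = 1..ℓ`,
`Z_{2i}Z_{2i+1}` for `i = 1..ℓ-1`, and `X_{2i}X_{2i+1}` for `i = 1..ℓ` with `i ≠ m`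
(indices mod `2ℓ`, `m` a fixed index in `1..ℓ`), together with the two single-qubit
operators `X_1` and `Z_{2m}`, generate the full Pauli group mod phases on the qubits of
`f`: their symplectic vectors span `F₂^{4ℓ}`. -/
theorem hopping_operators_and_splitting_span
    (ℓ m : ℕ) (hℓ : 0 < ℓ) (hm1 : 1 ≤ m) (hmℓ : m ≤ ℓ) :
    Submodule.span (ZMod 2)
      ({p : (Fin (2 * ℓ) → ZMod 2) × (Fin (2 * ℓ) → ZMod 2) |
          (∃ i, 1 ≤ i ∧ i ≤ ℓ ∧ p = (0, edgeVec (2 * ℓ) (2 * i - 2))) ∨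
          (∃ i, 1 ≤ i ∧ i ≤ ℓ ∧ p = (edgeVec (2 * ℓ) (2 * i - 2), 0)) ∨
          (∃ i, 1 ≤ i ∧ i ≤ ℓ - 1 ∧ p = (0, edgeVec (2 * ℓ) (2 * i - 1))) ∨
          (∃ i, 1 ≤ i ∧ i ≤ ℓ ∧ i ≠ m ∧ p = (edgeVec (2 * ℓ) (2 * i - 1), 0)) ∨
          p = (basisVec (2 * ℓ) 0, 0) ∨
          p = (0, basisVec (2 * ℓ) (2 * m - 1))}) = ⊤ := by
  refine aux_span ℓ m hℓ hm1 hmℓ _ ?_ ?_ ?_ ?_ ?_ ?_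
  · exact fun i h1 h2 => Submodule.subset_span (Or.inl ⟨i, h1, h2, rfl⟩)
  · exact fun i h1 h2 => Submodule.subset_span (Or.inr (Or.inl ⟨i, h1, h2, rfl⟩))
  · exact fun i h1 h2 => Submodule.subset_span (Or.inr (Or.inr (Or.inl ⟨i, h1, h2, rfl⟩)))
  · exact fun i h1 h2 h3 =>
      Submodule.subset_span (Or.inr (Or.inr (Or.inr (Or.inl ⟨i, h1, h2, h3, rfl⟩))))
  · exact Submodule.subset_span (Or.inr (Or.inr (Or.inr (Or.inr (Or.inl rfl)))))
  · exact Submodule.subset_span (Or.inr (Or.inr (Or.inr (Or.inr (Or.inr rfl)))))
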